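/- arXiv:2311.07847 — 2 statements merged into one kernel-verified Lean document; each statement's English description precedes it below -/
import Mathlib

section
/- Consider an ABPG sequence with g ≡ 0 (see context), and assume additionally that f is a KL function: for every x̄ ∈ ℝⁿ there exist η ∈ (0, +∞], a neighborhood U of x̄, and a function ψ : [0, η) → [0, ∞) that is continuous, concave, vanishes at 0, and is continuously differentiable with positive derivative on (0, η), such that ψ′(f(x) − f(x̄))·‖∇f(x)‖ ≥ 1 for all x ∈ U with f(x̄) < f(x) < f(x̄) + η. Then ∑_{k≥0} ‖x^{k+1} − x^k‖ < ∞, and the sequence {x^k} converges to a point x̃ with ∇f(x̃) = 0. -/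
open scoped RealInnerProductSpace NNReal

/-- Hessian–vector product `∇²φ(x) d`. -/
noncomputable def hessApply {n : ℕ} (φ : EuclideanSpace ℝ (Fin n) → ℝ)
    (x d : EuclideanSpace ℝ (Fin n)) : EuclideanSpace ℝ (Fin n) :=
  fderiv ℝ (gradient φ) x d

section AuxABPG

lemma inner_gradient_eq {n : ℕ} {f : EuclideanSpace ℝ (Fin n) → ℝ}
    (y v : EuclideanSpace ℝ (Fin n)) :
    ⟪gradient f y, v⟫ = fderiv ℝ f y v := by
  rw [← InnerProductSpace.toDual_apply_apply, gradient,
    (InnerProductSpace.toDual ℝ (EuclideanSpace ℝ (Fin n))).apply_symm_apply]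

lemma contDiff_gradient_one {n : ℕ} {φ : EuclideanSpace ℝ (Fin n) → ℝ} (hφ : ContDiff ℝ 2 φ) :
    ContDiff ℝ 1 (gradient φ) := by
  have h1 : ContDiff ℝ 1 (fun y => fderiv ℝ φ y) := hφ.fderiv_right (by norm_num)
  exact ((InnerProductSpace.toDual ℝ (EuclideanSpace ℝ (Fin n))).symm.contDiff).comp h1

lemma continuous_gradient_of_contDiff {n : ℕ} {f : EuclideanSpace ℝ (Fin n) → ℝ}
    (hf : ContDiff ℝ 1 f) : Continuous (gradient f) := by
  have h1 : Continuous (fun y => fderiv ℝ f y) := hf.continuous_fderiv (by norm_num)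
  exact (InnerProductSpace.toDual ℝ (EuclideanSpace ℝ (Fin n))).symm.continuous.comp h1

lemma hess_lower {n : ℕ} {φ : EuclideanSpace ℝ (Fin n) → ℝ} {σ : ℝ}
    (hφ : ContDiff ℝ 2 φ)
    (hφsc : ConvexOn ℝ Set.univ (fun y => φ y - σ / 2 * ‖y‖ ^ 2))
    (x d : EuclideanSpace ℝ (Fin n)) :
    σ * ‖d‖ ^ 2 ≤ ⟪hessApply φ x d, d⟫ := by
  set c : ℝ → EuclideanSpace ℝ (Fin n) := fun s => x + s • d with hc_def
  have hc : ∀ s : ℝ, HasDerivAt c d s := by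
    intro s
    have : HasDerivAt (fun s : ℝ => s • d) ((1 : ℝ) • d) s :=
      (hasDerivAt_id s).smul_const d
    simpa [hc_def] using this.const_add x
  have hφd : Differentiable ℝ φ := hφ.differentiable (by norm_num)
  have hg1 : ContDiff ℝ 1 (gradient φ) := contDiff_gradient_one hφ
  set q : ℝ → ℝ := fun s => φ (c s) - σ / 2 * ‖c s‖ ^ 2 with hq_def
  set q' : ℝ → ℝ := fun s => ⟪gradient φ (c s), d⟫ - σ * ⟪c s, d⟫ with hq'_def
  -- q has derivative q'
  have hq : ∀ s, HasDerivAt q (q' s) s := by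
    intro s
    have h1 : HasDerivAt (fun s => φ (c s)) (⟪gradient φ (c s), d⟫) s := by
      have h0 := (hφd (c s)).hasFDerivAt.comp_hasDerivAt s (hc s)
      simp only [Function.comp_def] at h0
      rw [inner_gradient_eq]
      exact h0
    have h2 : HasDerivAt (fun s => ⟪c s, c s⟫) (⟪c s, d⟫ + ⟪d, c s⟫) s :=
      (hc s).inner ℝ (hc s)
    have h2' : HasDerivAt (fun s => σ / 2 * ‖c s‖ ^ 2) (σ * ⟪c s, d⟫) s := by
      have h3 : HasDerivAt (fun s => σ / 2 * ⟪c s, c s⟫) (σ / 2 * (⟪c s, d⟫ + ⟪d, c s⟫)) s :=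
        h2.const_mul (σ / 2)
      have : (fun s => σ / 2 * ⟪c s, c s⟫) = fun s => σ / 2 * ‖c s‖ ^ 2 := by
        funext u; rw [real_inner_self_eq_norm_sq]
      rw [this] at h3
      convert h3 using 1
      rw [real_inner_comm (c s) d]; ring
    exact h1.sub h2'
  -- q is convex
  have hconv : ConvexOn ℝ Set.univ q := by
    have hA : ConvexOn ℝ (AffineMap.lineMap x (x + d) ⁻¹' Set.univ)
        ((fun y => φ y - σ / 2 * ‖y‖ ^ 2) ∘
          (AffineMap.lineMap x (x + d) : ℝ →ᵃ[ℝ] EuclideanSpace ℝ (Fin n))) :=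
      hφsc.comp_affineMap _
    have harg : ∀ s : ℝ, (AffineMap.lineMap x (x + d) : ℝ →ᵃ[ℝ] EuclideanSpace ℝ (Fin n)) s
        = c s := by
      intro s
      simp only [AffineMap.lineMap_apply, vsub_eq_sub, vadd_eq_add, hc_def]
      module
    have he : ((fun y => φ y - σ / 2 * ‖y‖ ^ 2) ∘
        (AffineMap.lineMap x (x + d) : ℝ →ᵃ[ℝ] EuclideanSpace ℝ (Fin n))) = q := by
      funext s
      rw [Function.comp_apply, harg]
    rw [he] at hA
    simpa using hA
  -- q' monotone
  have hmono : Monotone q' := by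
    have h := hconv.monotoneOn_deriv (fun s _ => (hq s).differentiableAt)
    have hd : deriv q = q' := funext fun s => (hq s).deriv
    rw [hd] at h
    exact monotoneOn_univ.mp h
  -- q' has derivative at 0
  have hq'0 : HasDerivAt q' (⟪hessApply φ x d, d⟫ - σ * ‖d‖ ^ 2) 0 := by
    have hu : HasDerivAt (fun s => gradient φ (c s)) (fderiv ℝ (gradient φ) x d) 0 := by
      have hdiff : DifferentiableAt ℝ (gradient φ) (c 0) :=
        (hg1.differentiable (by norm_num)) (c 0)
      have := hdiff.hasFDerivAt.comp_hasDerivAt 0 (hc 0)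
      simpa [hc_def, Function.comp_def] using this
    have h1 : HasDerivAt (fun s => ⟪gradient φ (c s), d⟫)
        (⟪gradient φ (c 0), (0:EuclideanSpace ℝ (Fin n))⟫ + ⟪fderiv ℝ (gradient φ) x d, d⟫) 0 :=
      hu.inner ℝ (hasDerivAt_const 0 d)
    have h2 : HasDerivAt (fun s => σ * ⟪c s, d⟫) (σ * (⟪c 0, (0:EuclideanSpace ℝ (Fin n))⟫ + ⟪d, d⟫)) 0 :=
      ((hc 0).inner ℝ (hasDerivAt_const 0 d)).const_mul σ
    have h3 := h1.sub h2
    have heq : (⟪gradient φ (c 0), (0:EuclideanSpace ℝ (Fin n))⟫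
        + ⟪fderiv ℝ (gradient φ) x d, d⟫)
        - σ * (⟪c 0, (0:EuclideanSpace ℝ (Fin n))⟫ + ⟪d, d⟫)
        = ⟪hessApply φ x d, d⟫ - σ * ‖d‖ ^ 2 := by
      simp only [inner_zero_right, zero_add, real_inner_self_eq_norm_sq, hessApply]
    rw [heq] at h3
    exact h3
  -- monotone implies derivative nonneg
  have hnn : 0 ≤ ⟪hessApply φ x d, d⟫ - σ * ‖d‖ ^ 2 := by
    have htend := hasDerivAt_iff_tendsto_slope.mp hq'0
    refine ge_of_tendsto htend ?_
    refine eventually_nhdsWithin_of_forall (fun s hs => ?_)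
    have hs' : s ≠ 0 := hs
    rcases lt_or_gt_of_ne hs' with h | h
    · have h1 : q' s ≤ q' 0 := hmono h.le
      rw [slope_def_field, sub_zero]
      exact div_nonneg_iff.mpr (Or.inr ⟨by linarith, h.le⟩)
    · have h1 : q' 0 ≤ q' s := hmono h.le
      rw [slope_def_field, sub_zero]
      exact div_nonneg (by linarith) h.le
  linarith

end AuxABPG

set_option maxHeartbeats 2000000 in
theorem abpg_global_convergence {n : ℕ}
    (φ f : EuclideanSpace ℝ (Fin n) → ℝ) (σ : ℝ) (hσ : 0 < σ)
    (hφ : ContDiff ℝ 2 φ)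
    (hφsc : ConvexOn ℝ Set.univ (fun y => φ y - σ / 2 * ‖y‖ ^ 2))
    (hf : ContDiff ℝ 1 f)
    (hbdd : BddBelow (Set.range f))
    (hlevel : ∀ r : ℝ, Bornology.IsBounded {y | f y ≤ r})
    (hlip : ∀ s : Set (EuclideanSpace ℝ (Fin n)), Bornology.IsBounded s →
      ∃ K : ℝ≥0, LipschitzOnWith K (gradient f) s)
    (lam : ℝ) (hlam : 0 < lam) (α : ℝ) (hα : α ∈ Set.Ioo (0 : ℝ) 1)
    (tmin : ℝ) (htmin : tmin ∈ Set.Ioc (0 : ℝ) 1)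
    (x d : ℕ → EuclideanSpace ℝ (Fin n)) (t : ℕ → ℝ)
    (ht : ∀ k, t k ∈ Set.Icc tmin 1)
    (hopt : ∀ k, gradient f (x k) + (1 / lam) • hessApply φ (x k) (d k) = 0)
    (hupd : ∀ k, x (k + 1) = x k + t k • d k)
    (hdec : ∀ k, f (x (k + 1)) ≤
      f (x k) - α * t k / (2 * lam) * ⟪hessApply φ (x k) (d k), d k⟫)
    (hKL : ∀ xbar : EuclideanSpace ℝ (Fin n), ∃ η : ℝ, 0 < η ∧
      ∃ U ∈ nhds xbar, ∃ ψ ψ' : ℝ → ℝ,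
        ContinuousOn ψ (Set.Ico 0 η) ∧ ConcaveOn ℝ (Set.Ico 0 η) ψ ∧ ψ 0 = 0 ∧
        (∀ s ∈ Set.Ioo (0 : ℝ) η, HasDerivAt ψ (ψ' s) s ∧ 0 < ψ' s) ∧
        ContinuousOn ψ' (Set.Ioo (0 : ℝ) η) ∧
        ∀ y ∈ U, f xbar < f y → f y < f xbar + η →
          1 ≤ ψ' (f y - f xbar) * ‖gradient f y‖) :
    Summable (fun k => ‖x (k + 1) - x k‖) ∧
      ∃ xtilde : EuclideanSpace ℝ (Fin n),
        Filter.Tendsto x Filter.atTop (nhds xtilde) ∧ gradient f xtilde = 0 := by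
  obtain ⟨hα0, hα1⟩ := hα
  obtain ⟨htmin0, htmin1⟩ := htmin
  have htk0 : ∀ k, 0 < t k := fun k => lt_of_lt_of_le htmin0 (ht k).1
  -- strong convexity bound
  have hsc : ∀ k (v : EuclideanSpace ℝ (Fin n)),
      σ * ‖v‖ ^ 2 ≤ ⟪hessApply φ (x k) v, v⟫ := fun k v => hess_lower hφ hφsc (x k) v
  -- monotone decrease with explicit constant
  set c : ℝ := α * tmin * σ / (2 * lam) with hc_def
  have hc0 : 0 < c := by positivity
  have hdec2 : ∀ k, f (x (k + 1)) ≤ f (x k) - c * ‖d k‖ ^ 2 := by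
    intro k
    have h1 := hsc k (d k)
    have h2 := hdec k
    have h3 : 0 ≤ σ * ‖d k‖ ^ 2 := by positivity
    have h4 : α * tmin / (2 * lam) * (σ * ‖d k‖ ^ 2)
        ≤ α * t k / (2 * lam) * ⟪hessApply φ (x k) (d k), d k⟫ := by
      have hcoef : 0 < α * tmin / (2 * lam) := by positivity
      have hcoef2 : α * tmin / (2 * lam) ≤ α * t k / (2 * lam) := by
        gcongr
        exact (ht k).1
      nlinarith [h1, h3, hcoef, hcoef2, le_trans h3 h1]
    have : c * ‖d k‖ ^ 2 = α * tmin / (2 * lam) * (σ * ‖d k‖ ^ 2) := by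
      rw [hc_def]; ring
    linarith [h2, h4]
  have hmonof : ∀ k, f (x (k + 1)) ≤ f (x k) := by
    intro k
    have := hdec2 k
    nlinarith [sq_nonneg ‖d k‖, hc0]
  have hanti : Antitone (fun k => f (x k)) := antitone_nat_of_succ_le hmonof
  -- the sublevel set
  set S : Set (EuclideanSpace ℝ (Fin n)) := {y | f y ≤ f (x 0)} with hS_def
  have hxS : ∀ k, x k ∈ S := fun k => hanti (Nat.zero_le k)
  have hScomp : IsCompact S := by
    refine Metric.isCompact_of_isClosed_isBounded ?_ (hlevel _)
    exact isClosed_le hf.continuous continuous_const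
  -- bound on the Hessian norms over S
  have hcontH : Continuous (fun y => ‖fderiv ℝ (gradient φ) y‖) :=
    ((contDiff_gradient_one hφ).continuous_fderiv (by norm_num)).norm
  obtain ⟨y0, hy0S, hy0'⟩ := hScomp.exists_isMaxOn ⟨x 0, hxS 0⟩ hcontH.continuousOn
  have hy0 : ∀ y ∈ S, ‖fderiv ℝ (gradient φ) y‖ ≤ ‖fderiv ℝ (gradient φ) y0‖ :=
    fun y hy => hy0' hy
  set C : ℝ := max ‖fderiv ℝ (gradient φ) y0‖ 1 with hC_def
  have hC1 : (1:ℝ) ≤ C := le_max_right _ _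
  have hCpos : (0:ℝ) < C := lt_of_lt_of_le one_pos hC1
  have hCb : ∀ k (v : EuclideanSpace ℝ (Fin n)), ‖hessApply φ (x k) v‖ ≤ C * ‖v‖ := by
    intro k v
    calc ‖hessApply φ (x k) v‖ ≤ ‖fderiv ℝ (gradient φ) (x k)‖ * ‖v‖ :=
          (fderiv ℝ (gradient φ) (x k)).le_opNorm v
      _ ≤ C * ‖v‖ := by
          apply mul_le_mul_of_nonneg_right _ (norm_nonneg v)
          exact le_trans (hy0 (x k) (hxS k)) (le_max_left _ _)
  -- gradient formula along the sequence
  have hgradfk : ∀ k, gradient f (x k) = -((1 / lam) • hessApply φ (x k) (d k)) :=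
    fun k => eq_neg_of_add_eq_zero_left (hopt k)
  have hgradnorm : ∀ k, ‖gradient f (x k)‖ ≤ C / lam * ‖d k‖ := by
    intro k
    rw [hgradfk k, norm_neg, norm_smul, norm_div, norm_one]
    rw [Real.norm_eq_abs, abs_of_pos hlam]
    calc 1 / lam * ‖hessApply φ (x k) (d k)‖ ≤ 1 / lam * (C * ‖d k‖) := by
          apply mul_le_mul_of_nonneg_left (hCb k (d k)) (by positivity)
      _ = C / lam * ‖d k‖ := by ring
  -- limit of function values
  have hbddx : BddBelow (Set.range fun k => f (x k)) := by
    apply BddBelow.mono _ hbdd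
    rintro _ ⟨k, rfl⟩
    exact ⟨x k, rfl⟩
  set fstar : ℝ := ⨅ k, f (x k) with hfstar_def
  have hflim : Filter.Tendsto (fun k => f (x k)) Filter.atTop (nhds fstar) :=
    tendsto_atTop_ciInf hanti hbddx
  have hfge : ∀ k, fstar ≤ f (x k) := fun k => ciInf_le hbddx k
  -- step norms
  have hx_step : ∀ k, x (k + 1) - x k = t k • d k := by
    intro k; rw [hupd k]; abel
  have hnormstep : ∀ k, ‖x (k + 1) - x k‖ = t k * ‖d k‖ := by
    intro k
    rw [hx_step k, norm_smul, Real.norm_eq_abs, abs_of_pos (htk0 k)]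
  have hnormstep_le : ∀ k, ‖x (k + 1) - x k‖ ≤ ‖d k‖ := by
    intro k
    rw [hnormstep k]
    nlinarith [(ht k).2, norm_nonneg (d k), htk0 k]
  -- main reduction: it suffices to prove summability
  suffices hsum : Summable (fun k => ‖x (k + 1) - x k‖) by
    refine ⟨hsum, ?_⟩
    have hcauchy : CauchySeq x := by
      apply cauchySeq_of_summable_dist
      have : (fun k => dist (x k) (x (k + 1))) = fun k => ‖x (k + 1) - x k‖ := by
        funext k
        rw [dist_eq_norm, norm_sub_rev]
      rw [this]
      exact hsum
    obtain ⟨xt, hxt⟩ := cauchySeq_tendsto_of_complete hcauchy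
    refine ⟨xt, hxt, ?_⟩
    have hstep0 : Filter.Tendsto (fun k => ‖x (k + 1) - x k‖) Filter.atTop (nhds 0) :=
      hsum.tendsto_atTop_zero
    have hd0 : Filter.Tendsto (fun k => ‖d k‖) Filter.atTop (nhds 0) := by
      have hb : ∀ k, ‖d k‖ ≤ tmin⁻¹ * ‖x (k + 1) - x k‖ := by
        intro k
        rw [hnormstep k]
        rw [← mul_assoc]
        have h1 : 1 ≤ tmin⁻¹ * t k := by
          rw [← div_eq_inv_mul]
          rw [le_div_iff₀ htmin0]
          simpa using (ht k).1
        nlinarith [norm_nonneg (d k)]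
      have hlim2 : Filter.Tendsto (fun k => tmin⁻¹ * ‖x (k + 1) - x k‖)
          Filter.atTop (nhds 0) := by
        have := hstep0.const_mul tmin⁻¹
        simpa using this
      exact squeeze_zero (fun k => norm_nonneg _) hb hlim2
    have hgrad0 : Filter.Tendsto (fun k => gradient f (x k)) Filter.atTop (nhds 0) := by
      rw [tendsto_zero_iff_norm_tendsto_zero]
      have hlim2 : Filter.Tendsto (fun k => C / lam * ‖d k‖) Filter.atTop (nhds 0) := by
        have := hd0.const_mul (C / lam)
        simpa using this
      exact squeeze_zero (fun k => norm_nonneg _) hgradnorm hlim2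
    have hgrad1 : Filter.Tendsto (fun k => gradient f (x k)) Filter.atTop
        (nhds (gradient f xt)) :=
      ((continuous_gradient_of_contDiff hf).tendsto xt).comp hxt
    exact tendsto_nhds_unique hgrad1 hgrad0
  
  -- Now prove summability.
  by_cases hA : ∃ k, f (x k) = fstar
  · -- eventually constant case
    obtain ⟨k0, hk0⟩ := hA
    have hconstf : ∀ j, k0 ≤ j → f (x j) = fstar :=
      fun j hj => le_antisymm (hk0 ▸ hanti hj) (hfge j)
    have hzero : ∀ j, k0 ≤ j → ‖x (j + 1) - x j‖ = 0 := by
      intro j hj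
      have h1 := hdec2 j
      rw [hconstf j hj, hconstf (j + 1) (le_trans hj (Nat.le_succ j))] at h1
      have h2 : ‖d j‖ ^ 2 ≤ 0 := by nlinarith
      have h3 : ‖d j‖ ^ 2 = 0 := le_antisymm h2 (sq_nonneg _)
      have hd : ‖d j‖ = 0 := by
        exact pow_eq_zero_iff (by norm_num) |>.mp h3
      rw [hnormstep j, hd, mul_zero]
    apply summable_of_ne_finset_zero (s := Finset.range (k0 + 1))
    intro j hj
    simp only [Finset.mem_range, not_lt] at hj
    exact hzero j (le_trans (Nat.le_succ k0) hj)
  · -- KL case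
    push_neg at hA
    have hgt : ∀ k, fstar < f (x k) := fun k => lt_of_le_of_ne (hfge k) (Ne.symm (hA k))
    -- cluster point
    obtain ⟨xb, hxbS, φs, hφs_mono, hφs_tend⟩ := hScomp.tendsto_subseq hxS
    have hfxb : f xb = fstar := by
      have h1 : Filter.Tendsto (fun j => f (x (φs j))) Filter.atTop (nhds (f xb)) :=
        (hf.continuous.tendsto xb).comp hφs_tend
      have h2 : Filter.Tendsto (fun j => f (x (φs j))) Filter.atTop (nhds fstar) :=
        hflim.comp hφs_mono.tendsto_atTop
      exact tendsto_nhds_unique h1 h2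
    obtain ⟨η, hη, U, hU, ψ, ψ', hψc, hψconc, hψ0, hψd, hψ'c, hKLineq⟩ := hKL xb
    obtain ⟨ρ, hρ, hball⟩ := Metric.mem_nhds_iff.mp hU
    set M : ℝ := C / (c * lam) with hM_def
    have hM0 : 0 < M := by positivity
    set Δ : ℕ → ℝ := fun k => f (x k) - fstar with hΔ_def
    have hΔpos : ∀ k, 0 < Δ k := fun k => sub_pos.mpr (hgt k)
    have hΔsucc : ∀ k, Δ (k + 1) ≤ Δ k := fun k => by
      simp only [hΔ_def]; linarith [hmonof k]
    have hΔanti : Antitone Δ := antitone_nat_of_succ_le hΔsucc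
    have hΔto0 : Filter.Tendsto Δ Filter.atTop (nhds 0) := by
      have := hflim.sub_const fstar
      simpa using this
    -- ψ is monotone and nonneg on [0, η)
    have hψmono : StrictMonoOn ψ (Set.Ico 0 η) := by
      apply strictMonoOn_of_deriv_pos (convex_Ico 0 η) hψc
      intro s hs
      rw [interior_Ico] at hs
      rw [(hψd s hs).1.deriv]
      exact (hψd s hs).2
    have hψnonneg : ∀ s ∈ Set.Ico (0:ℝ) η, 0 ≤ ψ s := by
      intro s hs
      rcases eq_or_lt_of_le hs.1 with h | h
      · rw [← h, hψ0]
      · have := hψmono ⟨le_rfl, hη⟩ hs h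
        rw [hψ0] at this
        exact this.le
    -- KL one-step estimate
    have hkey : ∀ k, Δ k < η → x k ∈ Metric.ball xb ρ →
        ‖x (k + 1) - x k‖ ≤ M * (ψ (Δ k) - ψ (Δ (k + 1))) := by
      intro k hkη hkball
      by_cases hdk : d k = 0
      · have hxk : x (k + 1) = x k := by rw [hupd k, hdk, smul_zero, add_zero]
        have hΔeq : Δ (k + 1) = Δ k := by simp only [hΔ_def, hxk]
        rw [hxk, hΔeq, sub_self, sub_self, norm_zero, mul_zero]
      · have hdpos : 0 < ‖d k‖ := norm_pos_iff.mpr hdk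
        have hmem : Δ k ∈ Set.Ioo (0:ℝ) η := ⟨hΔpos k, hkη⟩
        have hψ'pos : 0 < ψ' (Δ k) := (hψd _ hmem).2
        -- KL inequality
        have hKL1 : 1 ≤ ψ' (Δ k) * ‖gradient f (x k)‖ := by
          have h1 : f xb < f (x k) := by rw [hfxb]; exact hgt k
          have h2 : f (x k) < f xb + η := by rw [hfxb]; simp only [hΔ_def] at hkη; linarith
          have := hKLineq (x k) (hball hkball) h1 h2
          have harg : f (x k) - f xb = Δ k := by rw [hfxb]
          rwa [harg] at this
        have hgn : ‖gradient f (x k)‖ ≤ C / lam * ‖d k‖ := hgradnorm k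
        -- so ψ'(Δ k) * (C/lam) * ‖d k‖ ≥ 1, i.e. lam ≤ ψ'(Δ k) * C * ‖d k‖
        have hKL2 : lam ≤ ψ' (Δ k) * C * ‖d k‖ := by
          have h1 : 1 ≤ ψ' (Δ k) * (C / lam * ‖d k‖) :=
            le_trans hKL1 (mul_le_mul_of_nonneg_left hgn hψ'pos.le)
          have h2 : ψ' (Δ k) * (C / lam * ‖d k‖) * lam = ψ' (Δ k) * C * ‖d k‖ := by
            field_simp
          nlinarith [hlam]
        -- strict decrease
        have hΔstrict : Δ (k + 1) < Δ k := by
          have h1 := hdec2 k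
          have : 0 < c * ‖d k‖ ^ 2 := by positivity
          simp only [hΔ_def]
          linarith
        -- concavity inequality
        have hbmem : Δ (k + 1) ∈ Set.Ico (0:ℝ) η :=
          ⟨(hΔpos (k + 1)).le, lt_of_le_of_lt (hΔsucc k) hkη⟩
        have hamem : Δ k ∈ Set.Ico (0:ℝ) η := ⟨(hΔpos k).le, hkη⟩
        have hslope := hψconc.le_slope_of_hasDerivAt hbmem hamem hΔstrict (hψd _ hmem).1
        rw [slope_def_field] at hslope
        have hgap : 0 < Δ k - Δ (k + 1) := by linarith
        have hconc : ψ' (Δ k) * (Δ k - Δ (k + 1)) ≤ ψ (Δ k) - ψ (Δ (k + 1)) := by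
          rw [le_div_iff₀ hgap] at hslope
          linarith [hslope]
        -- decrease amount
        have hdecΔ : c * ‖d k‖ ^ 2 ≤ Δ k - Δ (k + 1) := by
          have := hdec2 k
          simp only [hΔ_def]
          linarith
        -- combine
        have hmain : c * lam * ‖d k‖ ≤ C * (ψ (Δ k) - ψ (Δ (k + 1))) := by
          have h1 : ψ' (Δ k) * (c * ‖d k‖ ^ 2) ≤ ψ (Δ k) - ψ (Δ (k + 1)) :=
            le_trans (mul_le_mul_of_nonneg_left hdecΔ hψ'pos.le) hconc
          have h2 : lam * (c * ‖d k‖) ≤ ψ' (Δ k) * C * ‖d k‖ * (c * ‖d k‖) :=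
            mul_le_mul_of_nonneg_right hKL2 (by positivity)
          have h3 : ψ' (Δ k) * C * ‖d k‖ * (c * ‖d k‖)
              = C * (ψ' (Δ k) * (c * ‖d k‖ ^ 2)) := by ring
          have h4 : C * (ψ' (Δ k) * (c * ‖d k‖ ^ 2)) ≤ C * (ψ (Δ k) - ψ (Δ (k + 1))) :=
            mul_le_mul_of_nonneg_left h1 hCpos.le
          rw [h3] at h2
          linarith [h2, h4]
        have hfin : ‖d k‖ ≤ M * (ψ (Δ k) - ψ (Δ (k + 1))) := by
          have hclam : 0 < c * lam := by positivity
          rw [hM_def, div_mul_eq_mul_div, le_div_iff₀ hclam]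
          have h5 : ‖d k‖ * (c * lam) = c * lam * ‖d k‖ := by ring
          rw [h5]
          exact hmain
        exact le_trans (hnormstep_le k) hfin
    -- choose the threshold index
    have hev1 : ∀ᶠ k in Filter.atTop, Δ k < η := hΔto0.eventually_lt_const hη
    have hψΔ0 : Filter.Tendsto (fun k => ψ (Δ k)) Filter.atTop (nhds 0) := by
      have hcw : ContinuousWithinAt ψ (Set.Ico 0 η) 0 := hψc 0 ⟨le_rfl, hη⟩
      have hmemIco : ∀ᶠ k in Filter.atTop, Δ k ∈ Set.Ico 0 η :=
        hev1.mono (fun k hk => ⟨(hΔpos k).le, hk⟩)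
      have h1 : Filter.Tendsto Δ Filter.atTop (nhdsWithin 0 (Set.Ico 0 η)) :=
        tendsto_nhdsWithin_iff.mpr ⟨hΔto0, hmemIco⟩
      have h2 := hcw.tendsto.comp h1
      rw [hψ0] at h2
      exact h2
    have hev2 : ∀ᶠ k in Filter.atTop, M * ψ (Δ k) < ρ / 2 := by
      have h1 : Filter.Tendsto (fun k => M * ψ (Δ k)) Filter.atTop (nhds 0) := by
        simpa using hψΔ0.const_mul M
      exact h1.eventually_lt_const (half_pos hρ)
    obtain ⟨K1, hK1⟩ := Filter.eventually_atTop.mp (hev1.and hev2)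
    -- choose the starting index along the subsequence
    have hballev : ∀ᶠ j in Filter.atTop, x (φs j) ∈ Metric.ball xb (ρ / 2) :=
      hφs_tend (Metric.ball_mem_nhds xb (half_pos hρ))
    have hgeev : ∀ᶠ j in Filter.atTop, K1 ≤ φs j :=
      hφs_mono.tendsto_atTop.eventually_ge_atTop K1
    obtain ⟨j0, hj1, hj2⟩ := (hballev.and hgeev).exists
    set k0 : ℕ := φs j0 with hk0_def
    have hk0η : Δ k0 < η := (hK1 k0 hj2).1
    have hk0ψ : M * ψ (Δ k0) < ρ / 2 := (hK1 k0 hj2).2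
    have hΔη : ∀ m : ℕ, Δ (k0 + m) < η :=
      fun m => lt_of_le_of_lt (hΔanti (Nat.le_add_right k0 m)) hk0η
    have hψnn : ∀ m : ℕ, 0 ≤ ψ (Δ (k0 + m)) :=
      fun m => hψnonneg _ ⟨(hΔpos _).le, hΔη m⟩
    -- induction: the iterates stay in the ball and the lengths telescope
    have hind : ∀ m : ℕ, x (k0 + m) ∈ Metric.ball xb ρ ∧
        ∑ i ∈ Finset.range m, ‖x (k0 + i + 1) - x (k0 + i)‖
          ≤ M * (ψ (Δ k0) - ψ (Δ (k0 + m))) := by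
      intro m
      induction m with
      | zero =>
        constructor
        · have : x k0 ∈ Metric.ball xb (ρ / 2) := hj1
          exact Metric.ball_subset_ball (by linarith) this
        · simp
      | succ m ih =>
        have hstep := hkey (k0 + m) (hΔη m) ih.1
        have hsum2 : ∑ i ∈ Finset.range (m + 1), ‖x (k0 + i + 1) - x (k0 + i)‖
            ≤ M * (ψ (Δ k0) - ψ (Δ (k0 + (m + 1)))) := by
          rw [Finset.sum_range_succ]
          have h2 := ih.2
          have h3 : (k0 + (m + 1)) = (k0 + m) + 1 := by ring
          rw [h3]
          have hstep' : ‖x (k0 + m + 1) - x (k0 + m)‖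
              ≤ M * (ψ (Δ (k0 + m)) - ψ (Δ (k0 + m + 1))) := hstep
          have : M * (ψ (Δ k0) - ψ (Δ (k0 + m)))
              + M * (ψ (Δ (k0 + m)) - ψ (Δ (k0 + m + 1)))
              = M * (ψ (Δ k0) - ψ (Δ (k0 + m + 1))) := by ring
          linarith
        refine ⟨?_, hsum2⟩
        -- the new point stays in the ball
        have htel : x (k0 + (m + 1)) - x k0
            = ∑ i ∈ Finset.range (m + 1), (x (k0 + i + 1) - x (k0 + i)) := by
          have := Finset.sum_range_sub (fun i => x (k0 + i)) (m + 1)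
          simpa [add_assoc] using this.symm
        have hnorm1 : ‖x (k0 + (m + 1)) - x k0‖ ≤ M * (ψ (Δ k0) - ψ (Δ (k0 + (m + 1)))) := by
          rw [htel]
          exact le_trans (norm_sum_le _ _) hsum2
        have hnorm2 : ‖x (k0 + (m + 1)) - x k0‖ < ρ / 2 := by
          have h4 : M * (ψ (Δ k0) - ψ (Δ (k0 + (m + 1)))) ≤ M * ψ (Δ k0) :=
            mul_le_mul_of_nonneg_left (sub_le_self _ (hψnn (m + 1))) hM0.le
          linarith
        rw [Metric.mem_ball]
        have hd1 : dist (x (k0 + (m + 1))) xb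
            ≤ dist (x (k0 + (m + 1))) (x k0) + dist (x k0) xb := dist_triangle _ _ _
        have hd2 : dist (x (k0 + (m + 1))) (x k0) < ρ / 2 := by
          rw [dist_eq_norm]
          exact hnorm2
        have hd3 : dist (x k0) xb < ρ / 2 := Metric.mem_ball.mp hj1
        linarith
    -- summability from bounded partial sums
    have hsle : ∀ m, ∑ i ∈ Finset.range m, ‖x (k0 + i + 1) - x (k0 + i)‖ ≤ M * ψ (Δ k0) := by
      intro m
      refine le_trans (hind m).2 ?_
      exact mul_le_mul_of_nonneg_left (sub_le_self _ (hψnn m)) hM0.le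
    have hsum0 : Summable (fun i => ‖x (k0 + i + 1) - x (k0 + i)‖) :=
      summable_of_sum_range_le (fun i => norm_nonneg _) hsle
    have hfe : (fun i => ‖x (k0 + i + 1) - x (k0 + i)‖)
        = fun i => ‖x (i + k0 + 1) - x (i + k0)‖ := by
      funext i
      rw [Nat.add_comm k0 i]
    rw [hfe] at hsum0
    exact (summable_nat_add_iff k0).mp hsum0
end

section
/- Consider an ABPG sequence with g ≡ 0 (see context) converging to a point x̃ with ∇f(x̃) = 0, and assume f satisfies the KL inequality at x̃ with exponent θ ∈ (1/2, 1): there exist c > 0, ε > 0, η > 0 such that |f(x) − f(x̃)|^θ ≤ c(1 − θ)‖∇f(x)‖ for all x with ‖x − x̃‖ < ε and f(x̃) < f(x) < f(x̃) + η. Then there exists c₂ > 0 such that ‖x^k − x̃‖ ≤ c₂·k^{−(1−θ)/(2θ−1)} for all k ≥ 1. -/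
open scoped RealInnerProductSpace NNReal

section Helpers

/-- Tangent-line inequality for the concave function `s ↦ s^q`, `q ∈ (0,1]`. -/
lemma tangent_rpow_concave {q a b : ℝ} (hq0 : 0 < q) (hq1 : q ≤ 1) (ha : 0 < a) (hb : 0 ≤ b) :
    b ^ q ≤ a ^ q + q * a ^ (q - 1) * (b - a) := by
  have hs : -1 ≤ b / a - 1 := by
    have : 0 ≤ b / a := div_nonneg hb ha.le
    linarith
  have key := rpow_one_add_le_one_add_mul_self hs hq0.le hq1
  have hba : (1 : ℝ) + (b / a - 1) = b / a := by ring
  rw [hba] at key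
  -- key : (b/a)^q ≤ 1 + q * (b/a - 1)
  have h1 : b ^ q = a ^ q * (b / a) ^ q := by
    rw [← Real.mul_rpow ha.le (div_nonneg hb ha.le), mul_div_cancel₀ _ ha.ne']
  have h2 : (0:ℝ) ≤ a ^ q := (Real.rpow_pos_of_pos ha q).le
  have h3 : a ^ q * (b / a) ^ q ≤ a ^ q * (1 + q * (b / a - 1)) :=
    mul_le_mul_of_nonneg_left key h2
  have h4 : a ^ q * (1 + q * (b / a - 1)) = a ^ q + q * (a ^ q / a) * (b - a) := by
    field_simp
  rw [h1]
  rw [h4] at h3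
  rwa [Real.rpow_sub ha, Real.rpow_one]

/-- One step of the KL recursion: the `-p` power increases by a fixed amount. -/
lemma step_inv_rpow {p C A B : ℝ} (hp0 : 0 < p) (hp1 : p ≤ 1) (hC : 0 < C)
    (hA : 0 < A) (hB : 0 < B) (hBA : B ≤ A)
    (hrec : A ^ (p + 1) ≤ C * (A - B)) :
    A ^ (-p) + p / C ≤ B ^ (-p) := by
  set a := A ^ p with ha_def
  set b := B ^ p with hb_def
  have hap : 0 < a := Real.rpow_pos_of_pos hA p
  have hbp : 0 < b := Real.rpow_pos_of_pos hB p
  have hba : b ≤ a := Real.rpow_le_rpow hB.le hBA hp0.le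
  -- tangent: b ≤ a + p A^{p-1}(B-A), so a - b ≥ p A^{p-1}(A-B)
  have htan := tangent_rpow_concave hp0 hp1 hA hB.le
  -- A - B ≥ A^{p+1}/C
  have hAB : A ^ (p + 1) / C ≤ A - B := (div_le_iff₀' hC).2 hrec
  -- p * A^{p-1} * (A - B) ≥ p * A^{p-1} * A^{p+1} / C = (p/C) * a^2
  have hApm : 0 < A ^ (p - 1) := Real.rpow_pos_of_pos hA _
  have h2p : A ^ (p - 1) * A ^ (p + 1) = a ^ 2 := by
    rw [← Real.rpow_add hA]
    have : p - 1 + (p + 1) = p * 2 := by ring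
    rw [this, Real.rpow_mul hA.le, Real.rpow_two]
  have key : p / C * a ^ 2 ≤ a - b := by
    have h5 : p * (A ^ (p - 1) * (A ^ (p + 1) / C)) ≤ p * (A ^ (p - 1) * (A - B)) := by
      apply mul_le_mul_of_nonneg_left _ hp0.le
      exact mul_le_mul_of_nonneg_left hAB hApm.le
    have h6 : a - b ≥ p * (A ^ (p - 1) * (A - B)) := by nlinarith [htan]
    calc p / C * a ^ 2 = p * (A ^ (p - 1) * (A ^ (p + 1) / C)) := by
          rw [← h2p]; ring
      _ ≤ p * (A ^ (p - 1) * (A - B)) := h5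
      _ ≤ a - b := h6
  -- conclude: a⁻¹ + p/C ≤ b⁻¹
  have hgoal : a⁻¹ + p / C ≤ b⁻¹ := by
    rw [inv_eq_one_div b, le_div_iff₀ hbp]
    have h7 : a⁻¹ * a = 1 := inv_mul_cancel₀ hap.ne'
    have h8 : b + p / C * (a * b) ≤ a := by nlinarith [mul_pos hap hbp]
    have h9 : a⁻¹ * (b + p / C * (a * b)) ≤ a⁻¹ * a :=
      mul_le_mul_of_nonneg_left h8 (inv_nonneg.2 hap.le)
    calc (a⁻¹ + p / C) * b = a⁻¹ * (b + p / C * (a * b)) - (a⁻¹ * a) * (p/C) * b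
          + p / C * b := by ring
      _ ≤ a⁻¹ * a - (a⁻¹ * a) * (p/C) * b + p / C * b := by linarith
      _ = 1 := by rw [h7]; ring
  rwa [Real.rpow_neg hA.le, Real.rpow_neg hB.le]

/-- Iterating the step: `r k ^ (-p) ≥ k * (p / C)`. -/
lemma rate_iter {r : ℕ → ℝ} {p C : ℝ} (hp0 : 0 < p) (hp1 : p ≤ 1) (hC : 0 < C)
    (hpos : ∀ k, 0 < r k) (hmono : ∀ k, r (k + 1) ≤ r k)
    (hrec : ∀ k, r k ^ (p + 1) ≤ C * (r k - r (k + 1))) :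
    ∀ k : ℕ, (k : ℝ) * (p / C) ≤ r k ^ (-p) := by
  intro k
  induction k with
  | zero => simpa using (Real.rpow_pos_of_pos (hpos 0) (-p)).le
  | succ k ih =>
    have hstep := step_inv_rpow hp0 hp1 hC (hpos k) (hpos (k + 1)) (hmono k) (hrec k)
    push_cast
    calc ((k : ℝ) + 1) * (p / C) = (k : ℝ) * (p / C) + p / C := by ring
      _ ≤ r k ^ (-p) + p / C := by linarith
      _ ≤ r (k + 1) ^ (-p) := hstep

/-- From an eventual bound to a bound for all `k ≥ 1`. -/
lemma eventual_to_all {u : ℕ → ℝ} (hu : ∀ k, 0 ≤ u k) {e C : ℝ} (hC : 0 < C) {K : ℕ}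
    (h : ∀ k, K ≤ k → u k ≤ C * (k : ℝ) ^ e) :
    ∃ c₂ : ℝ, 0 < c₂ ∧ ∀ k : ℕ, 1 ≤ k → u k ≤ c₂ * (k : ℝ) ^ e := by
  set c₂ := C + ∑ j ∈ Finset.range K, (u j + 1) * (j : ℝ) ^ (-e) with hc₂
  have hterm : ∀ j ∈ Finset.range K, 0 ≤ (u j + 1) * (j : ℝ) ^ (-e) := fun j _ =>
    mul_nonneg (by linarith [hu j]) (Real.rpow_nonneg (Nat.cast_nonneg j) _)
  have hsum : 0 ≤ ∑ j ∈ Finset.range K, (u j + 1) * (j : ℝ) ^ (-e) :=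
    Finset.sum_nonneg hterm
  refine ⟨c₂, by positivity, fun k hk => ?_⟩
  have hkpos : (0:ℝ) < (k : ℝ) := by exact_mod_cast hk
  have hke : (0:ℝ) < (k : ℝ) ^ e := Real.rpow_pos_of_pos hkpos e
  by_cases hkK : K ≤ k
  · calc u k ≤ C * (k : ℝ) ^ e := h k hkK
      _ ≤ c₂ * (k : ℝ) ^ e := by
        apply mul_le_mul_of_nonneg_right _ hke.le
        linarith
  · push_neg at hkK
    have hmem : k ∈ Finset.range K := Finset.mem_range.2 hkK
    have hle : (u k + 1) * (k : ℝ) ^ (-e) ≤ c₂ := by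
      have := Finset.single_le_sum hterm hmem
      linarith
    have hmul : (u k + 1) * (k : ℝ) ^ (-e) * (k : ℝ) ^ e ≤ c₂ * (k : ℝ) ^ e :=
      mul_le_mul_of_nonneg_right hle hke.le
    have hid : (k : ℝ) ^ (-e) * (k : ℝ) ^ e = 1 := by
      rw [← Real.rpow_add hkpos]; simp
    calc u k ≤ u k + 1 := by linarith
      _ = (u k + 1) * ((k : ℝ) ^ (-e) * (k : ℝ) ^ e) := by rw [hid]; ring
      _ ≤ c₂ * (k : ℝ) ^ e := by rw [← mul_assoc] at *; exact hmul


variable {E : Type*} [NormedAddCommGroup E] [InnerProductSpace ℝ E] [CompleteSpace E]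

lemma gradient_contDiff {φ : E → ℝ} (hφ : ContDiff ℝ 2 φ) : ContDiff ℝ 1 (gradient φ) := by
  have h1 : ContDiff ℝ 1 (fun y => fderiv ℝ φ y) := hφ.fderiv_right (by norm_num)
  have h2 : ContDiff ℝ 1 (fun L : E →L[ℝ] ℝ =>
      ((InnerProductSpace.toDual ℝ E).symm : (E →L[ℝ] ℝ) ≃ₗᵢ[ℝ] E) L) :=
    (InnerProductSpace.toDual ℝ E).symm.toContinuousLinearEquiv.toContinuousLinearMap.contDiff
  exact h2.comp h1

lemma fderiv_eq_inner_gradient {φ : E → ℝ} (y v : E) :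
    fderiv ℝ φ y v = ⟪gradient φ y, v⟫ := by
  rw [gradient, ← InnerProductSpace.toDual_apply_apply,
    (InnerProductSpace.toDual ℝ E).apply_symm_apply]

lemma hess_lower_bound {φ : E → ℝ} {σ : ℝ} (hφ : ContDiff ℝ 2 φ)
    (hsc : ConvexOn ℝ Set.univ (fun y => φ y - σ / 2 * ‖y‖ ^ 2)) (x d : E) :
    σ * ‖d‖ ^ 2 ≤ ⟪fderiv ℝ (gradient φ) x d, d⟫ := by
  have hφd : Differentiable ℝ φ := hφ.differentiable (by norm_num)
  have hG : ContDiff ℝ 1 (gradient φ) := gradient_contDiff hφ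
  have hGdiff : Differentiable ℝ (gradient φ) := hG.differentiable one_ne_zero
  -- the line t ↦ x + t • d
  have hline : ∀ t : ℝ, HasDerivAt (fun s : ℝ => x + s • d) d t := by
    intro t
    simpa using ((hasDerivAt_id t).smul_const d).const_add x
  -- ψ is convex on ℝ
  set ψ : ℝ → ℝ := fun s => φ (x + s • d) - σ / 2 * ‖x + s • d‖ ^ 2 with hψdef
  have hψconv : ConvexOn ℝ Set.univ ψ := by
    have hmap := hsc.comp_affineMap (AffineMap.lineMap x (x + d) : ℝ →ᵃ[ℝ] E)
    have hfun : ((fun y => φ y - σ / 2 * ‖y‖ ^ 2) ∘ (AffineMap.lineMap x (x + d) : ℝ →ᵃ[ℝ] E))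
        = ψ := by
      funext s
      simp only [Function.comp_apply, AffineMap.coe_lineMap, hψdef]
      have hx : s • (x + d -ᵥ x) +ᵥ x = x + s • d := by
        rw [vsub_eq_sub, vadd_eq_add, add_sub_cancel_left, add_comm]
      congr 2 <;> rw [hx]
    rw [hfun] at hmap
    simpa using hmap
  -- derivative of ψ
  have hD1 : ∀ t : ℝ, HasDerivAt (fun s : ℝ => φ (x + s • d))
      ⟪gradient φ (x + t • d), d⟫ t := by
    intro t
    have h := (hφd (x + t • d)).hasFDerivAt.comp_hasDerivAt t (hline t)
    rwa [fderiv_eq_inner_gradient] at h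
  have hD2 : ∀ t : ℝ, HasDerivAt (fun s : ℝ => σ / 2 * ‖x + s • d‖ ^ 2)
      (σ * ⟪x + t • d, d⟫) t := by
    intro t
    have h := ((hline t).inner ℝ (hline t)).const_mul (σ / 2)
    have hval : σ / 2 * (⟪x + t • d, d⟫ + ⟪d, x + t • d⟫) = σ * ⟪x + t • d, d⟫ := by
      rw [real_inner_comm d (x + t • d)]; ring
    rw [hval] at h
    simpa only [real_inner_self_eq_norm_sq] using h
  have hψ' : ∀ t : ℝ, HasDerivAt ψ
      (⟪gradient φ (x + t • d), d⟫ - σ * ⟪x + t • d, d⟫) t :=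
    fun t => (hD1 t).sub (hD2 t)
  -- monotonicity of derivative of convex ψ
  have hmono : ∀ t : ℝ, 0 < t →
      σ * t * ‖d‖ ^ 2 ≤ ⟪gradient φ (x + t • d), d⟫ - ⟪gradient φ (x + (0:ℝ) • d), d⟫ := by
    intro t ht
    have h1 := hψconv.le_slope_of_hasDerivAt (Set.mem_univ 0) (Set.mem_univ t) ht (hψ' 0)
    have h2 := hψconv.slope_le_of_hasDerivAt (Set.mem_univ 0) (Set.mem_univ t) ht (hψ' t)
    have h3 := h1.trans h2
    have h4 : ⟪x + t • d, d⟫ - ⟪x + (0:ℝ) • d, d⟫ = t * ‖d‖ ^ 2 := by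
      simp [inner_add_left, real_inner_smul_left, real_inner_self_eq_norm_sq]
    have h5 : σ * (⟪x + t • d, d⟫ - ⟪x + (0:ℝ) • d, d⟫) = σ * (t * ‖d‖ ^ 2) := by
      rw [h4]
    linarith [h3, h5]
  -- derivative of t ↦ ⟪∇φ(x + t d), d⟫ at 0
  set q : ℝ → ℝ := fun s => ⟪gradient φ (x + s • d), d⟫ with hqdef
  have hq : HasDerivAt q ⟪fderiv ℝ (gradient φ) x d, d⟫ 0 := by
    have hx0 : x + (0:ℝ) • d = x := by simp
    have hcomp : HasDerivAt (fun s : ℝ => gradient φ (x + s • d))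
        (fderiv ℝ (gradient φ) x d) 0 := by
      have h := (hGdiff (x + (0:ℝ) • d)).hasFDerivAt.comp_hasDerivAt 0 (hline 0)
      rwa [hx0] at h
    have h := hcomp.inner ℝ (hasDerivAt_const (0:ℝ) d)
    simpa [hqdef] using h
  -- take the limit of slopes from the right
  have hslope : Filter.Tendsto (slope q 0) (nhdsWithin 0 (Set.Ioi 0))
      (nhds ⟪fderiv ℝ (gradient φ) x d, d⟫) :=
    (hasDerivAt_iff_tendsto_slope.1 hq).mono_left
      (nhdsWithin_mono 0 (fun y hy => ne_of_gt hy))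
  refine ge_of_tendsto hslope ?_
  apply eventually_nhdsWithin_of_forall
  intro s hs
  have hs' : (0:ℝ) < s := hs
  rw [slope_def_field, sub_zero, le_div_iff₀ hs']
  have := hmono s hs'
  simp only [hqdef]
  linarith [this]

end Helpers


set_option maxHeartbeats 2000000 in
theorem abpg_sublinear_rate_KL_exponent_gt_half {n : ℕ}
    (φ f : EuclideanSpace ℝ (Fin n) → ℝ) (σ : ℝ) (hσ : 0 < σ)
    (hφ : ContDiff ℝ 2 φ)
    (hφsc : ConvexOn ℝ Set.univ (fun y => φ y - σ / 2 * ‖y‖ ^ 2))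
    (hf : ContDiff ℝ 1 f)
    (hbdd : BddBelow (Set.range f))
    (hlevel : ∀ r : ℝ, Bornology.IsBounded {y | f y ≤ r})
    (hlip : ∀ s : Set (EuclideanSpace ℝ (Fin n)), Bornology.IsBounded s →
      ∃ K : ℝ≥0, LipschitzOnWith K (gradient f) s)
    (lam : ℝ) (hlam : 0 < lam) (α : ℝ) (hα : α ∈ Set.Ioo (0 : ℝ) 1)
    (tmin : ℝ) (htmin : tmin ∈ Set.Ioc (0 : ℝ) 1)
    (x d : ℕ → EuclideanSpace ℝ (Fin n)) (t : ℕ → ℝ)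
    (ht : ∀ k, t k ∈ Set.Icc tmin 1)
    (hopt : ∀ k, gradient f (x k) + (1 / lam) • hessApply φ (x k) (d k) = 0)
    (hupd : ∀ k, x (k + 1) = x k + t k • d k)
    (hdec : ∀ k, f (x (k + 1)) ≤
      f (x k) - α * t k / (2 * lam) * ⟪hessApply φ (x k) (d k), d k⟫)
    (xtilde : EuclideanSpace ℝ (Fin n))
    (hconv : Filter.Tendsto x Filter.atTop (nhds xtilde))
    (hstat : gradient f xtilde = 0)
    (θ : ℝ) (hθ : θ ∈ Set.Ioo (1 / 2 : ℝ) 1)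
    (c ε η : ℝ) (hc : 0 < c) (hε : 0 < ε) (hη : 0 < η)
    (hKL : ∀ y : EuclideanSpace ℝ (Fin n), ‖y - xtilde‖ < ε →
      f xtilde < f y → f y < f xtilde + η →
        |f y - f xtilde| ^ θ ≤ c * (1 - θ) * ‖gradient f y‖) :
    ∃ c₂ : ℝ, 0 < c₂ ∧ ∀ k : ℕ, 1 ≤ k →
      ‖x k - xtilde‖ ≤ c₂ * (k : ℝ) ^ (-((1 - θ) / (2 * θ - 1))) := by
  obtain ⟨hα0, hα1⟩ := hα
  obtain ⟨htmin0, htmin1⟩ := htmin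
  obtain ⟨hθhalf, hθ1⟩ := hθ
  have hθ0 : 0 < θ := by linarith
  have h1θ : 0 < 1 - θ := by linarith
  obtain ⟨β, hβdef⟩ : ∃ b : ℝ, b = α * tmin * σ / (2 * lam) := ⟨_, rfl⟩
  have hβ : 0 < β := by rw [hβdef]; positivity
  -- the Hessian-vector product equals `-lam • ∇f (x k)`
  have hHd : ∀ k, hessApply φ (x k) (d k) = (-lam) • gradient f (x k) := by
    intro k
    have h := hopt k
    have h2 : gradient f (x k) = -((1 / lam) • hessApply φ (x k) (d k)) :=
      eq_neg_of_add_eq_zero_left h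
    rw [h2, smul_neg, neg_smul, neg_neg, smul_smul, mul_one_div, div_self hlam.ne', one_smul]
  -- lower bound on the Hessian quadratic form
  have hIP : ∀ k, σ * ‖d k‖ ^ 2 ≤ ⟪hessApply φ (x k) (d k), d k⟫ := fun k =>
    hess_lower_bound hφ hφsc (x k) (d k)
  -- sufficient decrease
  have hA3 : ∀ k, f (x (k + 1)) ≤ f (x k) - β * ‖d k‖ ^ 2 := by
    intro k
    have h := hdec k
    have h2 := hIP k
    have htk := ht k
    have hdk2 : (0:ℝ) ≤ ‖d k‖ ^ 2 := sq_nonneg _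
    have key : β * ‖d k‖ ^ 2 ≤ α * t k / (2 * lam) * ⟪hessApply φ (x k) (d k), d k⟫ := by
      have hIPnn : 0 ≤ ⟪hessApply φ (x k) (d k), d k⟫ := le_trans (by positivity) h2
      have e1 : tmin * (σ * ‖d k‖ ^ 2) ≤ t k * ⟪hessApply φ (x k) (d k), d k⟫ :=
        mul_le_mul htk.1 h2 (by positivity) (le_trans htmin0.le htk.1)
      have e2 : α / (2 * lam) * (tmin * (σ * ‖d k‖ ^ 2))
          ≤ α / (2 * lam) * (t k * ⟪hessApply φ (x k) (d k), d k⟫) :=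
        mul_le_mul_of_nonneg_left e1 (by positivity)
      calc β * ‖d k‖ ^ 2 = α / (2 * lam) * (tmin * (σ * ‖d k‖ ^ 2)) := by
            rw [hβdef]; ring
        _ ≤ α / (2 * lam) * (t k * ⟪hessApply φ (x k) (d k), d k⟫) := e2
        _ = α * t k / (2 * lam) * ⟪hessApply φ (x k) (d k), d k⟫ := by ring
    linarith
  -- the residual sequence
  obtain ⟨r, hrdef⟩ : ∃ g : ℕ → ℝ, g = fun k => f (x k) - f xtilde := ⟨_, rfl⟩
  have hrmono : ∀ k, r (k + 1) ≤ r k := by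
    intro k
    have := hA3 k
    have : f (x (k+1)) ≤ f (x k) := by nlinarith [sq_nonneg ‖d k‖]
    simp only [hrdef]
    linarith
  have hrant : Antitone r := antitone_nat_of_succ_le hrmono
  have hrlim : Filter.Tendsto r Filter.atTop (nhds 0) := by
    have h1 : Filter.Tendsto (fun k => f (x k)) Filter.atTop (nhds (f xtilde)) :=
      (hf.continuous.continuousAt.tendsto).comp hconv
    rw [hrdef]
    simpa using h1.sub_const (f xtilde)
  have hrnn : ∀ k, 0 ≤ r k := by
    intro k
    refine le_of_tendsto hrlim ?_
    exact Filter.eventually_atTop.2 ⟨k, fun j hj => hrant hj⟩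
  -- Hessian operator norm bound near the limit
  obtain ⟨M, hMdef⟩ : ∃ m : ℝ, m = ‖fderiv ℝ (gradient φ) xtilde‖ + 1 := ⟨_, rfl⟩
  have hM : 0 < M := by rw [hMdef]; positivity
  have hGcont : Continuous (fun y => fderiv ℝ (gradient φ) y) :=
    (gradient_contDiff hφ).continuous_fderiv one_ne_zero
  have hMev : ∀ᶠ k in Filter.atTop, ‖fderiv ℝ (gradient φ) (x k)‖ ≤ M := by
    have h1 : Filter.Tendsto (fun k => ‖fderiv ℝ (gradient φ) (x k)‖) Filter.atTop
        (nhds ‖fderiv ℝ (gradient φ) xtilde‖) :=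
      ((continuous_norm.comp hGcont).continuousAt.tendsto).comp hconv
    simp only [hMdef]
    exact h1.eventually_le_const (lt_add_one _)
  have hεev : ∀ᶠ k in Filter.atTop, ‖x k - xtilde‖ < ε := by
    have h1 : Filter.Tendsto (fun k => ‖x k - xtilde‖) Filter.atTop (nhds 0) := by
      simpa using (hconv.sub_const xtilde).norm
    exact h1.eventually_lt_const hε
  have hηev : ∀ᶠ k in Filter.atTop, r k < η := hrlim.eventually_lt_const hη
  obtain ⟨K, hK⟩ := Filter.eventually_atTop.1 ((hMev.and hεev).and hηev)
  -- gradient bound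
  have hgradb : ∀ k, K ≤ k → ‖gradient f (x k)‖ ≤ M / lam * ‖d k‖ := by
    intro k hk
    have h1 : lam * ‖gradient f (x k)‖ = ‖hessApply φ (x k) (d k)‖ := by
      rw [hHd k, norm_smul]
      simp [abs_of_pos hlam]
    have h2 : ‖hessApply φ (x k) (d k)‖ ≤ M * ‖d k‖ := by
      calc ‖hessApply φ (x k) (d k)‖ = ‖fderiv ℝ (gradient φ) (x k) (d k)‖ := rfl
        _ ≤ ‖fderiv ℝ (gradient φ) (x k)‖ * ‖d k‖ :=
            ContinuousLinearMap.le_opNorm _ _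
        _ ≤ M * ‖d k‖ := mul_le_mul_of_nonneg_right ((hK k hk).1.1) (norm_nonneg _)
    rw [div_mul_eq_mul_div, le_div_iff₀ hlam]
    linarith [h1, h2]
  by_cases hall : ∀ k, 0 < r k
  · -- Case A : `f (x k) > f xtilde` for all `k`
    obtain ⟨c₁, hc₁def⟩ : ∃ y : ℝ, y = c * (1 - θ) * M / lam := ⟨_, rfl⟩
    have hc₁ : 0 < c₁ := by
      rw [hc₁def]; exact div_pos (mul_pos (mul_pos hc h1θ) hM) hlam
    obtain ⟨C₁, hC₁def⟩ : ∃ y : ℝ, y = c₁ ^ 2 / β := ⟨_, rfl⟩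
    have hC₁ : 0 < C₁ := by rw [hC₁def]; exact div_pos (pow_pos hc₁ 2) hβ
    obtain ⟨E₀, hE₀def⟩ : ∃ y : ℝ, y = c * M / (β * lam) := ⟨_, rfl⟩
    have hE₀ : 0 < E₀ := by rw [hE₀def]; exact div_pos (mul_pos hc hM) (mul_pos hβ hlam)
    -- KL inequality along the sequence
    have hkl : ∀ k, K ≤ k → r k ^ θ ≤ c₁ * ‖d k‖ := by
      intro k hk
      have h1 := hKL (x k) ((hK k hk).1.2 : ‖x k - xtilde‖ < ε)
        (by have := hall k; simp only [hrdef] at this; linarith)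
        (by have := (hK k hk).2; simp only [hrdef] at this; linarith)
      have habs : |f (x k) - f xtilde| = r k := by
        rw [hrdef]
        exact abs_of_pos (by have := hall k; rw [hrdef] at this; exact this)
      rw [habs] at h1
      calc r k ^ θ ≤ c * (1 - θ) * ‖gradient f (x k)‖ := h1
        _ ≤ c * (1 - θ) * (M / lam * ‖d k‖) :=
            mul_le_mul_of_nonneg_left (hgradb k hk) (mul_nonneg hc.le h1θ.le)
        _ = c₁ * ‖d k‖ := by rw [hc₁def]; ring
    -- the recursion
    have hrec : ∀ k, K ≤ k → r k ^ (2 * θ) ≤ C₁ * (r k - r (k + 1)) := by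
      intro k hk
      have h1 := hkl k hk
      have h2 : (r k ^ θ) ^ 2 ≤ (c₁ * ‖d k‖) ^ 2 := by
        have := Real.rpow_nonneg (hrnn k) θ
        nlinarith
      have h3 : β * ‖d k‖ ^ 2 ≤ r k - r (k + 1) := by
        have := hA3 k; simp only [hrdef]; linarith
      have h4 : r k ^ (2 * θ) = (r k ^ θ) ^ 2 := by
        rw [show (2:ℝ) * θ = θ * 2 by ring, Real.rpow_mul (hrnn k), Real.rpow_two]
      rw [h4]
      calc (r k ^ θ) ^ 2 ≤ c₁ ^ 2 * ‖d k‖ ^ 2 := by nlinarith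
        _ = C₁ * (β * ‖d k‖ ^ 2) := by rw [hC₁def]; field_simp
        _ ≤ C₁ * (r k - r (k + 1)) := mul_le_mul_of_nonneg_left h3 hC₁.le
    -- rate for r
    obtain ⟨p, hpdef⟩ : ∃ y : ℝ, y = 2 * θ - 1 := ⟨_, rfl⟩
    have hp0 : 0 < p := by simp only [hpdef]; linarith
    have hp1 : p ≤ 1 := by simp only [hpdef]; linarith
    have hrate : ∀ j : ℕ, (j : ℝ) * (p / C₁) ≤ r (K + j) ^ (-p) := by
      apply rate_iter hp0 hp1 hC₁ (fun j => hall (K + j))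
        (fun j => hrmono (K + j))
      intro j
      have h := hrec (K + j) (Nat.le_add_right K j)
      rw [show p + 1 = 2 * θ by rw [hpdef]; ring]
      exact h
    -- step length bounded by telescoping rpow differences
    have hdbound : ∀ k, K ≤ k → ‖d k‖ ≤ E₀ * (r k ^ (1 - θ) - r (k + 1) ^ (1 - θ)) := by
      intro k hk
      have hdiffnn : 0 ≤ r k ^ (1 - θ) - r (k + 1) ^ (1 - θ) := by
        have := Real.rpow_le_rpow (hrnn (k + 1)) (hrmono k) h1θ.le
        linarith
      by_cases hd0 : d k = 0
      · rw [hd0, norm_zero]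
        exact mul_nonneg hE₀.le hdiffnn
      have hdpos : 0 < ‖d k‖ := norm_pos_iff.2 hd0
      have htan := tangent_rpow_concave h1θ (by linarith) (hall k) (hrnn (k + 1))
      rw [show (1 - θ) - 1 = -θ by ring] at htan
      have h3 : β * ‖d k‖ ^ 2 ≤ r k - r (k + 1) := by
        have := hA3 k; simp only [hrdef]; linarith
      have hrinv : (c₁ * ‖d k‖)⁻¹ ≤ r k ^ (-θ) := by
        rw [Real.rpow_neg (hrnn k)]
        exact inv_anti₀ (Real.rpow_pos_of_pos (hall k) θ) (hkl k hk)
      -- r k ^{1-θ} - r (k+1) ^{1-θ} ≥ (1-θ) r k ^{-θ} (r k - r (k+1))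
      have h5 : (1 - θ) * r k ^ (-θ) * (r k - r (k + 1)) ≤
          r k ^ (1 - θ) - r (k + 1) ^ (1 - θ) := by
        nlinarith [htan]
      have h6 : (1 - θ) * (c₁ * ‖d k‖)⁻¹ * (β * ‖d k‖ ^ 2) ≤
          (1 - θ) * r k ^ (-θ) * (r k - r (k + 1)) := by
        have hrθnn : 0 ≤ r k ^ (-θ) := Real.rpow_nonneg (hrnn k) _
        have h6' := mul_le_mul_of_nonneg_left
          (mul_le_mul hrinv h3 (by positivity) hrθnn) h1θ.le
        linarith [h6']
      have hdne : ‖d k‖ ≠ 0 := hdpos.ne'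
      have hc₁ne : c₁ ≠ 0 := hc₁.ne'
      have hβne : β ≠ 0 := hβ.ne'
      have hMne : M ≠ 0 := hM.ne'
      have hlamne : lam ≠ 0 := hlam.ne'
      have hcne : c ≠ 0 := hc.ne'
      have h1θne : (1:ℝ) - θ ≠ 0 := h1θ.ne'
      have haux : (1 - θ) * β * c₁⁻¹ = E₀⁻¹ := by
        rw [hc₁def, hE₀def]
        field_simp
      have hdd : ‖d k‖⁻¹ * ‖d k‖ ^ 2 = ‖d k‖ := by
        rw [sq, ← mul_assoc, inv_mul_cancel₀ hdne, one_mul]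
      have h7 : (1 - θ) * (c₁ * ‖d k‖)⁻¹ * (β * ‖d k‖ ^ 2) = ‖d k‖ / E₀ := by
        calc (1 - θ) * (c₁ * ‖d k‖)⁻¹ * (β * ‖d k‖ ^ 2)
            = ((1 - θ) * β * c₁⁻¹) * (‖d k‖⁻¹ * ‖d k‖ ^ 2) := by rw [mul_inv]; ring
          _ = E₀⁻¹ * ‖d k‖ := by rw [haux, hdd]
          _ = ‖d k‖ / E₀ := by rw [div_eq_mul_inv, mul_comm]
      rw [h7] at h6
      have := h6.trans h5
      rw [div_le_iff₀ hE₀] at this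
      linarith [this]
    -- telescoping bound
    have htel : ∀ k, K ≤ k → ∀ N, k ≤ N →
        ‖x N - x k‖ ≤ E₀ * (r k ^ (1 - θ) - r N ^ (1 - θ)) := by
      intro k hk N hN
      induction N, hN using Nat.le_induction with
      | base => simp
      | succ N hN ih =>
        have hstep : ‖x (N + 1) - x N‖ ≤ ‖d N‖ := by
          rw [hupd N]
          have : x N + t N • d N - x N = t N • d N := by abel
          rw [this, norm_smul, Real.norm_eq_abs,
            abs_of_pos (lt_of_lt_of_le htmin0 (ht N).1)]
          calc t N * ‖d N‖ ≤ 1 * ‖d N‖ :=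
                mul_le_mul_of_nonneg_right (ht N).2 (norm_nonneg _)
            _ = ‖d N‖ := one_mul _
        have htri : ‖x (N + 1) - x k‖ ≤ ‖x (N + 1) - x N‖ + ‖x N - x k‖ := by
          have := dist_triangle (x (N + 1)) (x N) (x k)
          simpa [dist_eq_norm] using this
        have hd := hdbound N (le_trans hk hN)
        calc ‖x (N + 1) - x k‖ ≤ ‖x (N + 1) - x N‖ + ‖x N - x k‖ := htri
          _ ≤ ‖d N‖ + E₀ * (r k ^ (1 - θ) - r N ^ (1 - θ)) := add_le_add hstep ih
          _ ≤ E₀ * (r N ^ (1 - θ) - r (N + 1) ^ (1 - θ))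
              + E₀ * (r k ^ (1 - θ) - r N ^ (1 - θ)) := by linarith
          _ = E₀ * (r k ^ (1 - θ) - r (N + 1) ^ (1 - θ)) := by ring
    -- distance to the limit
    have hxb : ∀ k, K ≤ k → ‖x k - xtilde‖ ≤ E₀ * r k ^ (1 - θ) := by
      intro k hk
      have h1 : Filter.Tendsto (fun N => ‖x N - x k‖) Filter.atTop
          (nhds ‖xtilde - x k‖) := (hconv.sub_const (x k)).norm
      have h2 : ‖xtilde - x k‖ ≤ E₀ * r k ^ (1 - θ) := by
        refine le_of_tendsto h1 (Filter.eventually_atTop.2 ⟨k, fun N hN => ?_⟩)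
        have := htel k hk N hN
        have hNnn : 0 ≤ r N ^ (1 - θ) := Real.rpow_nonneg (hrnn N) _
        nlinarith [this]
      rwa [norm_sub_rev]
    -- final estimate for k ≥ 2K+1
    have hfinal : ∀ k, 2 * K + 1 ≤ k →
        ‖x k - xtilde‖ ≤ (E₀ * (p / (2 * C₁)) ^ (-(1 / p) * (1 - θ)))
          * (k : ℝ) ^ (-((1 - θ) / (2 * θ - 1))) := by
      intro k hk
      have hkK : K ≤ k := by omega
      have hk1 : 1 ≤ k := by omega
      have hkpos : (0:ℝ) < k := by exact_mod_cast hk1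
      have hcast : ((k - K : ℕ) : ℝ) = (k : ℝ) - K := by
        rw [Nat.cast_sub hkK]
      have hidx : K + (k - K) = k := Nat.add_sub_cancel' hkK
      have h1 : ((k - K : ℕ) : ℝ) * (p / C₁) ≤ r k ^ (-p) := by
        have := hrate (k - K)
        rwa [hidx] at this
      have h2 : (k : ℝ) / 2 ≤ (k : ℝ) - K := by
        have : (2 * K + 1 : ℝ) ≤ k := by exact_mod_cast hk
        linarith
      have h3 : (k : ℝ) * (p / (2 * C₁)) ≤ r k ^ (-p) := by
        rw [hcast] at h1
        have : (k : ℝ) * (p / (2 * C₁)) = (k : ℝ) / 2 * (p / C₁) := by ring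
        rw [this]
        calc (k : ℝ) / 2 * (p / C₁) ≤ ((k : ℝ) - K) * (p / C₁) :=
              mul_le_mul_of_nonneg_right h2 (div_nonneg hp0.le hC₁.le)
          _ ≤ r k ^ (-p) := h1
      have hApos : (0:ℝ) < (k : ℝ) * (p / (2 * C₁)) := mul_pos hkpos (div_pos hp0 (by linarith))
      -- r k ≤ ((k) * (p/(2C₁)))^(-(1/p))
      have h4 : r k ≤ ((k : ℝ) * (p / (2 * C₁))) ^ (-(1 / p)) := by
        have h5 : (r k ^ (-p)) ^ (-(1 / p)) ≤ ((k : ℝ) * (p / (2 * C₁))) ^ (-(1 / p)) :=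
          Real.rpow_le_rpow_of_nonpos hApos h3 (neg_nonpos.2 (one_div_nonneg.2 hp0.le))
        have h6 : (r k ^ (-p)) ^ (-(1 / p)) = r k := by
          rw [← Real.rpow_mul (hrnn k)]
          rw [show (-p) * (-(1/p)) = 1 by rw [neg_mul_neg, mul_one_div, div_self hp0.ne']]
          exact Real.rpow_one _
        rwa [h6] at h5
      have h7 : r k ^ (1 - θ) ≤ (((k : ℝ) * (p / (2 * C₁))) ^ (-(1 / p))) ^ (1 - θ) :=
        Real.rpow_le_rpow (hrnn k) h4 h1θ.le
      have h8 : (((k : ℝ) * (p / (2 * C₁))) ^ (-(1 / p))) ^ (1 - θ)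
          = (k : ℝ) ^ (-(1 / p) * (1 - θ)) * (p / (2 * C₁)) ^ (-(1 / p) * (1 - θ)) := by
        rw [← Real.rpow_mul hApos.le,
          Real.mul_rpow (Nat.cast_nonneg k) (div_nonneg hp0.le (by linarith) : (0:ℝ) ≤ p / (2 * C₁))]
      have h9 : (k : ℝ) ^ (-(1 / p) * (1 - θ)) = (k : ℝ) ^ (-((1 - θ) / (2 * θ - 1))) := by
        congr 1
        rw [hpdef]
        ring
      calc ‖x k - xtilde‖ ≤ E₀ * r k ^ (1 - θ) := hxb k hkK
        _ ≤ E₀ * ((((k : ℝ) * (p / (2 * C₁))) ^ (-(1 / p))) ^ (1 - θ)) :=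
            mul_le_mul_of_nonneg_left h7 hE₀.le
        _ = (E₀ * (p / (2 * C₁)) ^ (-(1 / p) * (1 - θ)))
            * (k : ℝ) ^ (-((1 - θ) / (2 * θ - 1))) := by
            rw [h8, ← h9]; ring
    exact eventual_to_all (fun k => norm_nonneg _)
      (mul_pos hE₀ (Real.rpow_pos_of_pos (div_pos hp0 (by linarith)) _)) hfinal
  · -- Case B : `r` hits 0, the sequence is eventually constant equal to xtilde
    push_neg at hall
    obtain ⟨k₀, hk₀⟩ := hall
    have hr0 : r k₀ = 0 := le_antisymm hk₀ (hrnn k₀)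
    have hzero : ∀ j, k₀ ≤ j → r j = 0 := fun j hj =>
      le_antisymm (hr0 ▸ hrant hj) (hrnn j)
    have hd0 : ∀ j, k₀ ≤ j → d j = 0 := by
      intro j hj
      have h1 := hA3 j
      have h2 : r (j + 1) = 0 := hzero (j + 1) (by omega)
      have h3 : r j = 0 := hzero j hj
      simp only [hrdef] at h2 h3
      have : β * ‖d j‖ ^ 2 ≤ 0 := by linarith
      have : ‖d j‖ ^ 2 ≤ 0 := by nlinarith
      have : ‖d j‖ = 0 := by nlinarith [sq_nonneg ‖d j‖, norm_nonneg (d j)]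
      exact norm_eq_zero.1 this
    have hconst : ∀ j, k₀ ≤ j → x j = x k₀ := by
      intro j hj
      induction j, hj using Nat.le_induction with
      | base => rfl
      | succ N hN ih => rw [hupd N, hd0 N hN, smul_zero, add_zero, ih]
    have hxt : x k₀ = xtilde := by
      have h1 : Filter.Tendsto x Filter.atTop (nhds (x k₀)) :=
        tendsto_atTop_of_eventually_const hconst
      exact tendsto_nhds_unique h1 hconv
    refine eventual_to_all (fun k => norm_nonneg _) one_pos (K := k₀) ?_
    intro k hk
    rw [hconst k hk, hxt, sub_self, norm_zero, one_mul]
    positivity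
end
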